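/- Let ψ : I → E₁³ be a unit-speed spacelike curve with nonvanishing curvature κ and Frenet frame (T,N,B) satisfying T' = κN, N' = -εκT + τB, B' = τN, where g(N,N) = ε = ±1 and g(B,B) = -ε. If there exists a unit spacelike vector d and a real number n with |n| < 1 such that g(d, T(s)) = n for all s, then ε = -1 (i.e., the principal normal N is timelike) and τ(s)/κ(s) is constant, equal to ∓cot(φ) where n = cos(φ). -/

import Mathlib

noncomputable section
open Real
def g (u v : ℝ × ℝ × ℝ) : ℝ := -(u.1 * v.1) + u.2.1 * v.2.1 + u.2.2 * v.2.2

lemma g_symm (u v : ℝ × ℝ × ℝ) : g u v = g v u := by simp [g]; ring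

lemma g_smul (d : ℝ × ℝ × ℝ) (a : ℝ) (v : ℝ × ℝ × ℝ) : g d (a • v) = a * g d v := by
  simp [g, Prod.smul_def]; ring

lemma g_add (d u v : ℝ × ℝ × ℝ) : g d (u + v) = g d u + g d v := by
  simp [g, Prod.add_def]; ring

lemma g_zero (d : ℝ × ℝ × ℝ) : g d 0 = 0 := by simp [g]

lemma gram_det (u v w x : ℝ × ℝ × ℝ) :
    g u u * (g v v * (g w w * g x x - g w x * g x w) - g v w * (g w v * g x x - g w x * g x v) + g v x * (g w v * g x w - g w w * g x v))
    - g u v * (g v u * (g w w * g x x - g w x * g x w) - g v w * (g w u * g x x - g w x * g x u) + g v x * (g w u * g x w - g w w * g x u))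
    + g u w * (g v u * (g w v * g x x - g w x * g x v) - g v v * (g w u * g x x - g w x * g x u) + g v x * (g w u * g x v - g w v * g x u))
    - g u x * (g v u * (g w v * g x w - g w w * g x v) - g v v * (g w u * g x w - g w w * g x u) + g v w * (g w u * g x v - g w v * g x u)) = 0 := by
  simp only [g]; ring

lemma key (u v w x : ℝ × ℝ × ℝ) (ε n c : ℝ) (hε2 : ε ^ 2 = 1)
    (huu : g u u = 1) (huv : g u v = n) (huw : g u w = 0) (hux : g u x = c)
    (hvv : g v v = 1) (hww : g w w = ε) (hxx : g x x = -ε)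
    (hvw : g v w = 0) (hvx : g v x = 0) (hwx : g w x = 0) :
    n ^ 2 - ε * c ^ 2 = 1 := by
  have h := gram_det u v w x
  rw [g_symm v u, g_symm w u, g_symm x u, g_symm w v, g_symm x v, g_symm x w] at h
  rw [huu, huv, huw, hux, hvv, hww, hxx, hvw, hvx, hwx] at h
  nlinarith [h, hε2]

lemma hasDerivAt_g_const (d : ℝ × ℝ × ℝ) (f : ℝ → ℝ × ℝ × ℝ) (f' : ℝ × ℝ × ℝ) (s : ℝ)
    (hf : HasDerivAt f f' s) : HasDerivAt (fun t => g d (f t)) (g d f') s := by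
  have h1 : HasDerivAt (fun t => (f t).1) f'.1 s :=
    (ContinuousLinearMap.fst ℝ ℝ (ℝ × ℝ)).hasFDerivAt.comp_hasDerivAt s hf
  have h2 : HasDerivAt (fun t => (f t).2.1) f'.2.1 s :=
    ((ContinuousLinearMap.fst ℝ ℝ ℝ).comp (ContinuousLinearMap.snd ℝ ℝ (ℝ × ℝ))).hasFDerivAt.comp_hasDerivAt s hf
  have h3 : HasDerivAt (fun t => (f t).2.2) f'.2.2 s :=
    ((ContinuousLinearMap.snd ℝ ℝ ℝ).comp (ContinuousLinearMap.snd ℝ ℝ (ℝ × ℝ))).hasFDerivAt.comp_hasDerivAt s hf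
  simpa [g] using (((h1.const_mul d.1).fun_neg.fun_add (h2.const_mul d.2.1)).fun_add (h3.const_mul d.2.2))

theorem stmt1 (ψ T N B : ℝ → ℝ × ℝ × ℝ) (κ τ : ℝ → ℝ) (ε : ℝ) (d : ℝ × ℝ × ℝ) (n : ℝ)
    (hε : ε = 1 ∨ ε = -1)
    (hκ : ∀ s, κ s ≠ 0)
    (hT : ∀ s, deriv ψ s = T s)
    (hFr1 : ∀ s, deriv T s = κ s • N s)
    (hFr2 : ∀ s, deriv N s = (-(ε * κ s)) • T s + τ s • B s)
    (hFr3 : ∀ s, deriv B s = τ s • N s)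
    (hTT : ∀ s, g (T s) (T s) = 1)
    (hNN : ∀ s, g (N s) (N s) = ε)
    (hBB : ∀ s, g (B s) (B s) = -ε)
    (hTN : ∀ s, g (T s) (N s) = 0)
    (hTB : ∀ s, g (T s) (B s) = 0)
    (hNB : ∀ s, g (N s) (B s) = 0)
    (hd : g d d = 1) (hn : |n| < 1)
    (hdT : ∀ s, g d (T s) = n) :
    ε = -1 ∧ ∃ φ : ℝ, cos φ = n ∧
      ((∀ s, τ s = -Real.cot φ * κ s) ∨ (∀ s, τ s = Real.cot φ * κ s)) := by
  have hε2 : ε ^ 2 = 1 := by rcases hε with h | h <;> rw [h] <;> norm_num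
  have hεne : ε ≠ 0 := by rcases hε with h | h <;> rw [h] <;> norm_num
  have hn2 : n ^ 2 < 1 := by
    have := abs_lt.mp hn; nlinarith [this.1, this.2]
  have hn1 : -1 ≤ n := by have := abs_lt.mp hn; linarith [this.1]
  have hn1' : n ≤ 1 := by have := abs_lt.mp hn; linarith [this.2]
  have hNne : ∀ s, N s ≠ 0 := by
    intro s h
    have := hNN s
    rw [h, g_zero] at this
    exact hεne this.symm
  -- T has derivative κ • N
  have hTd : ∀ s, HasDerivAt T (κ s • N s) s := by
    intro s
    have hdiff : DifferentiableAt ℝ T s := by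
      by_contra h
      have h0 := deriv_zero_of_not_differentiableAt h
      rw [hFr1 s] at h0
      exact smul_ne_zero (hκ s) (hNne s) h0
    have := hdiff.hasDerivAt
    rwa [hFr1 s] at this
  -- g d N = 0
  have hdN : ∀ s, g d (N s) = 0 := by
    intro s
    have h1 := (hasDerivAt_g_const d T (κ s • N s) s (hTd s)).deriv
    have h2 : deriv (fun t => g d (T t)) s = 0 := by
      have : (fun t => g d (T t)) = fun _ => n := funext hdT
      rw [this]; simp
    rw [h2, g_smul] at h1
    exact (mul_eq_zero.mp h1.symm).resolve_left (hκ s)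
  -- N has derivative
  have hNd : ∀ s, HasDerivAt N ((-(ε * κ s)) • T s + τ s • B s) s := by
    intro s
    have hne : (-(ε * κ s)) • T s + τ s • B s ≠ 0 := by
      intro h
      have h1 : g (T s) ((-(ε * κ s)) • T s + τ s • B s) = 0 := by rw [h, g_zero]
      rw [g_add, g_smul, g_smul, hTT s, hTB s] at h1
      have : ε * κ s = 0 := by linarith
      exact (mul_ne_zero hεne (hκ s)) this
    have hdiff : DifferentiableAt ℝ N s := by
      by_contra h
      have h0 := deriv_zero_of_not_differentiableAt h
      rw [hFr2 s] at h0
      exact hne h0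
    have := hdiff.hasDerivAt
    rwa [hFr2 s] at this
  -- τ s * g d (B s) = ε * κ s * n
  have hτc : ∀ s, τ s * g d (B s) = ε * κ s * n := by
    intro s
    have h1 := (hasDerivAt_g_const d N _ s (hNd s)).deriv
    have h2 : deriv (fun t => g d (N t)) s = 0 := by
      have : (fun t => g d (N t)) = fun _ => (0 : ℝ) := funext hdN
      rw [this]; simp
    rw [h2, g_add, g_smul, g_smul, hdT s] at h1
    linarith [h1]
  -- the key pointwise identity
  have hkey : ∀ s, n ^ 2 - ε * (g d (B s)) ^ 2 = 1 := by
    intro s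
    exact key d (T s) (N s) (B s) ε n (g d (B s)) hε2 hd (hdT s) (hdN s) rfl
      (hTT s) (hNN s) (hBB s) (hTN s) (hTB s) (hNB s)
  -- ε = -1
  have hεm : ε = -1 := by
    rcases hε with h | h
    · exfalso
      have := hkey 0
      rw [h] at this
      nlinarith [sq_nonneg (g d (B 0))]
    · exact h
  have hc2 : ∀ s, (g d (B s)) ^ 2 = 1 - n ^ 2 := by
    intro s; have := hkey s; rw [hεm] at this; linarith
  have hcne : ∀ s, g d (B s) ≠ 0 := by
    intro s h
    have := hc2 s; rw [h] at this; nlinarith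
  refine ⟨hεm, Real.arccos n, Real.cos_arccos hn1 hn1', ?_⟩
  have hsin : Real.sin (Real.arccos n) = Real.sqrt (1 - n ^ 2) := by
    rw [Real.sin_arccos]
  have hsq : (0:ℝ) < Real.sqrt (1 - n ^ 2) := Real.sqrt_pos.mpr (by nlinarith)
  have hcot : Real.cot (Real.arccos n) = n / Real.sqrt (1 - n ^ 2) := by
    rw [Real.cot_eq_cos_div_sin, Real.cos_arccos hn1 hn1', hsin]
  by_cases hn0 : n = 0
  · right
    intro s
    have h := hτc s
    rw [hn0] at hcot ⊢
    have hτ0 : τ s = 0 := by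
      have : τ s * g d (B s) = 0 := by rw [h, hn0]; ring
      exact (mul_eq_zero.mp this).resolve_right (hcne s)
    rw [hτ0, hcot]; ring
  · -- n ≠ 0 : τ never vanishes, B differentiable, g d B constant
    have hτne : ∀ s, τ s ≠ 0 := by
      intro s h
      have h2 := hτc s
      rw [h, hεm] at h2
      have h3 : κ s * n = 0 := by linarith
      exact mul_ne_zero (hκ s) hn0 h3
    have hBd : ∀ s, HasDerivAt B (τ s • N s) s := by
      intro s
      have hdiff : DifferentiableAt ℝ B s := by
        by_contra h
        have h0 := deriv_zero_of_not_differentiableAt h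
        rw [hFr3 s] at h0
        exact smul_ne_zero (hτne s) (hNne s) h0
      have := hdiff.hasDerivAt
      rwa [hFr3 s] at this
    have hcconst : ∀ s, g d (B s) = g d (B 0) := by
      intro s
      have hdiffc : Differentiable ℝ (fun t => g d (B t)) := fun t =>
        (hasDerivAt_g_const d B _ t (hBd t)).differentiableAt
      have hderc : ∀ t, deriv (fun t => g d (B t)) t = 0 := by
        intro t
        have h1 := (hasDerivAt_g_const d B _ t (hBd t)).deriv
        rw [g_smul, hdN t] at h1
        simpa using h1
      exact is_const_of_deriv_eq_zero hdiffc hderc s 0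
    set c0 := g d (B 0) with hc0
    have hc0sq : c0 ^ 2 = 1 - n ^ 2 := hc2 0
    have habs : |c0| = Real.sqrt (1 - n ^ 2) := by
      rw [← hc0sq, Real.sqrt_sq_eq_abs]
    have hτeq : ∀ s, τ s * c0 = -(κ s * n) := by
      intro s
      have := hτc s
      rw [hcconst s, hεm] at this
      linarith [this]
    rcases abs_eq (le_of_lt hsq) |>.mp habs with hce | hce
    · left
      intro s
      have h := hτeq s
      rw [hce] at h
      rw [hcot]
      field_simp
      linarith [h]
    · right
      intro s
      have h := hτeq s
      rw [hce] at h
      rw [hcot]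
      field_simp
      linarith [h]
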